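/- Conversely: let a₀ = ã - t̃ and suppose y : ℝ → ℝ solves y'(τ) = α(τ, τ + a₀) + β(τ, τ + a₀)·y(τ) + γ(τ, τ + a₀)·y(τ)² with y(0) = p(0, a₀), where p solves the PDE (∂/∂t + ∂/∂a)p = α + β·p + γ·p² with the same initial condition along the characteristic and the functions α + β·y + γ·y² are locally Lipschitz in y (guaranteeing uniqueness of the ODE solution). Then y(t̃) = p(t̃, ã). -/

import Mathlib

/-- Conversely: under a local Lipschitz condition guaranteeing uniqueness,
the solution y of the characteristic Riccati ODE with y(0) = p(0, a₀),
a₀ = aTilde - tTilde, satisfies y(tTilde) = p(tTilde, aTilde). -/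
theorem characteristic_ode_to_pde
    (p α β γ pt pa : ℝ × ℝ → ℝ) (y : ℝ → ℝ) (tTilde aTilde : ℝ)
    (ht : 0 ≤ tTilde)
    (hdiff : Differentiable ℝ p)
    (hpt : ∀ t a, HasDerivAt (fun s => p (s, a)) (pt (t, a)) t)
    (hpa : ∀ t a, HasDerivAt (fun s => p (t, s)) (pa (t, a)) a)
    (hPDE : ∀ x, pt x + pa x = α x + β x * p x + γ x * p x ^ 2)
    (hcont : Continuous α) (hcontβ : Continuous β) (hcontγ : Continuous γ)
    (hlip : LocallyLipschitz (fun q : ℝ × ℝ =>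
      α (q.1, q.1 + (aTilde - tTilde)) + β (q.1, q.1 + (aTilde - tTilde)) * q.2
        + γ (q.1, q.1 + (aTilde - tTilde)) * q.2 ^ 2))
    (hy : ∀ τ : ℝ, HasDerivAt y
      (α (τ, τ + (aTilde - tTilde)) + β (τ, τ + (aTilde - tTilde)) * y τ
        + γ (τ, τ + (aTilde - tTilde)) * y τ ^ 2) τ)
    (hy0 : y 0 = p (0, aTilde - tTilde)) :
    y tTilde = p (tTilde, aTilde) := by
  set a₀ := aTilde - tTilde with ha₀
  set F : ℝ × ℝ → ℝ := fun q =>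
    α (q.1, q.1 + a₀) + β (q.1, q.1 + a₀) * q.2 + γ (q.1, q.1 + a₀) * q.2 ^ 2 with hF
  set z : ℝ → ℝ := fun τ => p (τ, τ + a₀) with hz
  -- z solves the same ODE
  have hzderiv : ∀ τ : ℝ, HasDerivAt z (F (τ, z τ)) τ := by
    intro τ
    have hD := (hdiff (τ, τ + a₀)).hasFDerivAt
    set D := fderiv ℝ p (τ, τ + a₀) with hDdef
    have hcurve : HasDerivAt (fun s : ℝ => (s, s + a₀)) ((1 : ℝ), (1 : ℝ)) τ := by
      simpa using HasDerivAt.prodMk (hasDerivAt_id τ) ((hasDerivAt_id τ).add_const a₀)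
    have h1 : HasDerivAt z (D (1, 1)) τ := hD.comp_hasDerivAt τ hcurve
    have hpt' : pt (τ, τ + a₀) = D (1, 0) := by
      have hc : HasDerivAt (fun s : ℝ => (s, τ + a₀)) ((1 : ℝ), (0 : ℝ)) τ := by
        simpa using HasDerivAt.prodMk (hasDerivAt_id τ) (hasDerivAt_const τ (τ + a₀))
      exact (hpt τ (τ + a₀)).unique (hD.comp_hasDerivAt τ hc)
    have hpa' : pa (τ, τ + a₀) = D (0, 1) := by
      have hc : HasDerivAt (fun s : ℝ => (τ, s)) ((0 : ℝ), (1 : ℝ)) (τ + a₀) := by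
        simpa using HasDerivAt.prodMk (hasDerivAt_const (τ + a₀) τ) (hasDerivAt_id (τ + a₀))
      exact (hpa τ (τ + a₀)).unique
        ((hdiff (τ, τ + a₀)).hasFDerivAt.comp_hasDerivAt (τ + a₀) hc)
    have hadd : D (1, 1) = D (1, 0) + D (0, 1) := by
      rw [← map_add]; norm_num
    have hp := hPDE (τ, τ + a₀)
    have hFz : F (τ, z τ) = pt (τ, τ + a₀) + pa (τ, τ + a₀) := by
      simp only [hF, hz]; linarith
    rw [hFz, hpt', hpa', ← hadd]; exact h1
  have hycont : Continuous y :=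
    continuous_iff_continuousAt.mpr fun τ => (hy τ).continuousAt
  have hzcont : Continuous z :=
    continuous_iff_continuousAt.mpr fun τ => (hzderiv τ).continuousAt
  have hz0 : y 0 = z 0 := by simpa [hz] using hy0
  set S : Set ℝ := {τ | y τ = z τ} with hS
  have hSclosed : IsClosed S := isClosed_eq hycont hzcont
  have hSopen : IsOpen S := by
    rw [isOpen_iff_mem_nhds]
    intro τ₀ hτ₀
    have hτ₀' : y τ₀ = z τ₀ := hτ₀
    obtain ⟨K, t, htn, hK⟩ := hlip (τ₀, y τ₀)
    set s : ℝ → Set ℝ := fun τ => {x | (τ, x) ∈ t} with hsdef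
    have hv : ∀ τ, LipschitzOnWith K (fun x => F (τ, x)) (s τ) := by
      intro τ x₁ hx₁ x₂ hx₂
      refine le_trans (hK hx₁ hx₂) ?_
      gcongr
      simp [Prod.edist_eq]
    have hmemy : ∀ᶠ τ in nhds τ₀, (τ, y τ) ∈ t := by
      have hc : ContinuousAt (fun τ => (τ, y τ)) τ₀ :=
        (continuous_id.prodMk hycont).continuousAt
      exact hc htn
    have hmemz : ∀ᶠ τ in nhds τ₀, (τ, z τ) ∈ t := by
      have hc : ContinuousAt (fun τ => (τ, z τ)) τ₀ :=
        (continuous_id.prodMk hzcont).continuousAt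
      rw [hτ₀'] at htn
      exact hc htn
    have heq : y =ᶠ[nhds τ₀] z :=
      ODE_solution_unique_of_eventually (Filter.Eventually.of_forall hv)
        (hmemy.mono fun τ hmem => ⟨by simpa [hF] using hy τ, hmem⟩)
        (hmemz.mono fun τ hmem => ⟨hzderiv τ, hmem⟩) hτ₀'
    exact heq
  have hclopen : IsClopen S := ⟨hSclosed, hSopen⟩
  have : S = Set.univ := by
    rcases isClopen_iff.mp hclopen with h | h
    · have h0 : (0 : ℝ) ∈ S := hz0
      rw [h] at h0
      exact absurd h0 (by simp)
    · exact h
  have hmem : tTilde ∈ S := this ▸ Set.mem_univ _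
  have : y tTilde = p (tTilde, tTilde + a₀) := hmem
  rwa [ha₀, add_sub_cancel] at this
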